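/- arXiv:2501.13730 — 2 statements merged into one kernel-verified Lean document; each statement's English description precedes it below -/
import Mathlib

section
/- Let G be a graph with maximum degree at most 3, Cheeger constant at least h > 0, and n vertices (with no isolated vertices). Suppose G is a minor of Q_d. Then n ≤ (10√2·e)/(√π·h) · 2^d/√d. -/
open SimpleGraph

/-- `H` is a minor of `G`: there is a model of `H` in `G`, i.e. a family of nonempty,
pairwise-disjoint connected branch sets in `G` indexed by the vertices of `H`, with
adjacent vertices of `H` having branch sets joined by an edge of `G`. -/
def SimpleGraph.IsMinorOf {V W : Type*} (H : SimpleGraph V) (G : SimpleGraph W) : Prop :=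
  ∃ μ : V → Set W,
    (∀ a, (G.induce (μ a)).Connected) ∧
    (Pairwise fun a b => Disjoint (μ a) (μ b)) ∧
    ∀ ⦃a b⦄, H.Adj a b → ∃ x ∈ μ a, ∃ y ∈ μ b, G.Adj x y

/-- A combinatorial embedding of `H` into `G`: vertices map injectively to vertices,
each edge maps to a walk (road) between the images of its endpoints, roads of
non-adjacent edges are vertex-disjoint, and the image of a vertex not lying on an
edge avoids the road of that edge. -/
structure CombEmbedding {V W : Type*} (H : SimpleGraph V) (G : SimpleGraph W) where
  vmap : V → W
  inj : Function.Injective vmap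
  road : ∀ ⦃a b⦄, H.Adj a b → G.Walk (vmap a) (vmap b)
  disj : ∀ ⦃a b c d⦄ (h₁ : H.Adj a b) (h₂ : H.Adj c d),
    a ≠ c → a ≠ d → b ≠ c → b ≠ d →
    ∀ x, x ∈ (road h₁).support → x ∉ (road h₂).support
  iso : ∀ ⦃a b⦄ (h : H.Adj a b) (w : V), w ≠ a → w ≠ b → vmap w ∉ (road h).support

/-- Cartesian (box) product of a family of graphs: two functions are adjacent iff they
differ in exactly one coordinate, where they are adjacent. -/
def prodGraph {ι : Type*} {V : ι → Type*} (G : ∀ i, SimpleGraph (V i)) :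
    SimpleGraph (∀ i, V i) where
  Adj x y := ∃ i, (G i).Adj (x i) (y i) ∧ ∀ j, j ≠ i → x j = y j
  symm := by
    constructor
    rintro x y ⟨i, hadj, hj⟩
    exact ⟨i, hadj.symm, fun j hji => (hj j hji).symm⟩
  loopless := by
    constructor
    rintro x ⟨i, hadj, -⟩
    exact (G i).loopless.irrefl _ hadj

/-- The `d`-dimensional hypercube: vertices are `{0,1}`-strings of length `d`, adjacent iff
they differ in exactly one coordinate. -/
def hypercube (d : ℕ) : SimpleGraph (Fin d → Bool) :=
  prodGraph fun _ => (⊤ : SimpleGraph Bool)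

/-! ### Auxiliary lemmas -/

lemma centralBinom_sq_mul_le (m : ℕ) :
    (Nat.centralBinom m) ^ 2 * (3 * m + 1) ≤ 16 ^ m := by
  induction m with
  | zero => simp [Nat.centralBinom]
  | succ m ih =>
    have key : (m + 1) * Nat.centralBinom (m + 1)
        = 2 * (2 * m + 1) * Nat.centralBinom m :=
      Nat.succ_mul_centralBinom_succ m
    have hpos : 0 < (m + 1) ^ 2 := by positivity
    have hineq : (2 * (2 * m + 1)) ^ 2 * (3 * (m + 1) + 1) ≤ 16 * ((m + 1) ^ 2 * (3 * m + 1)) := by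
      nlinarith
    have hmain : (m + 1) ^ 2 * ((Nat.centralBinom (m + 1)) ^ 2 * (3 * (m + 1) + 1))
        ≤ (m + 1) ^ 2 * 16 ^ (m + 1) := by
      calc (m + 1) ^ 2 * ((Nat.centralBinom (m + 1)) ^ 2 * (3 * (m + 1) + 1))
          = ((m + 1) * Nat.centralBinom (m + 1)) ^ 2 * (3 * (m + 1) + 1) := by ring
        _ = (2 * (2 * m + 1)) ^ 2 * (3 * (m + 1) + 1) * (Nat.centralBinom m) ^ 2 := by
            rw [key]; ring
        _ ≤ 16 * ((m + 1) ^ 2 * (3 * m + 1)) * (Nat.centralBinom m) ^ 2 :=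
            Nat.mul_le_mul_right _ hineq
        _ = (m + 1) ^ 2 * (16 * ((Nat.centralBinom m) ^ 2 * (3 * m + 1))) := by ring
        _ ≤ (m + 1) ^ 2 * (16 * 16 ^ m) :=
            Nat.mul_le_mul_left _ (Nat.mul_le_mul_left _ ih)
        _ = (m + 1) ^ 2 * 16 ^ (m + 1) := by rw [pow_succ]; ring
    exact Nat.le_of_mul_le_mul_left hmain hpos

lemma choose_half_sq_mul_le (d : ℕ) : (d.choose (d / 2)) ^ 2 * d ≤ 4 ^ d := by
  rcases Nat.even_or_odd d with ⟨m, rfl⟩ | ⟨m, rfl⟩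
  · have hd : m + m = 2 * m := by ring
    rw [hd]
    have h2 : (2 * m) / 2 = m := by omega
    rw [h2]
    have hcb := centralBinom_sq_mul_le m
    have hc : Nat.centralBinom m = (2 * m).choose m := rfl
    calc ((2 * m).choose m) ^ 2 * (2 * m) ≤ ((2 * m).choose m) ^ 2 * (3 * m + 1) :=
          Nat.mul_le_mul_left _ (by omega)
      _ ≤ 16 ^ m := by rw [← hc]; exact hcb
      _ = 4 ^ (2 * m) := by
          rw [pow_mul]
          norm_num
  · have h2 : (2 * m + 1) / 2 = m := by omega
    rw [h2]
    have hdouble : Nat.centralBinom (m + 1) = 2 * (2 * m + 1).choose m := by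
      have h1 : Nat.centralBinom (m + 1) = (2 * m + 2).choose (m + 1) := by
        unfold Nat.centralBinom; congr 1
      have h2' : (2 * m + 2).choose (m + 1) = (2 * m + 1).choose m + (2 * m + 1).choose (m + 1) :=
        Nat.choose_succ_succ (2 * m + 1) m
      have h3 : (2 * m + 1).choose (m + 1) = (2 * m + 1).choose m := by
        have hs := Nat.choose_symm (show m + 1 ≤ 2 * m + 1 by omega)
        have hm : 2 * m + 1 - (m + 1) = m := by omega
        rw [hm] at hs
        exact hs.symm
      omega
    have hcb := centralBinom_sq_mul_le (m + 1)
    rw [hdouble] at hcb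
    have hkey : ((2 * m + 1).choose m) ^ 2 * (3 * (m + 1) + 1) ≤ 4 * 16 ^ m := by
      have h16 : 16 ^ (m + 1) = 16 * 16 ^ m := by rw [pow_succ]; ring
      nlinarith
    calc ((2 * m + 1).choose m) ^ 2 * (2 * m + 1)
        ≤ ((2 * m + 1).choose m) ^ 2 * (3 * (m + 1) + 1) := Nat.mul_le_mul_left _ (by omega)
      _ ≤ 4 * 16 ^ m := hkey
      _ = 4 ^ (2 * m + 1) := by rw [pow_succ, pow_mul]; ring_nf

lemma choose_half_mul_sqrt_le (d : ℕ) :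
    (d.choose (d / 2) : ℝ) * Real.sqrt d ≤ 2 ^ d := by
  have h := choose_half_sq_mul_le d
  have hR : ((d.choose (d / 2) : ℝ)) ^ 2 * d ≤ ((2 : ℝ) ^ d) ^ 2 := by
    have h4 : ((2 : ℝ) ^ d) ^ 2 = (4 : ℝ) ^ d := by
      rw [← pow_mul, mul_comm, pow_mul]; norm_num
    rw [h4]
    exact_mod_cast h
  have h1 : (d.choose (d / 2) : ℝ) * Real.sqrt d
      = Real.sqrt (((d.choose (d / 2) : ℝ)) ^ 2 * d) := by
    rw [Real.sqrt_mul (by positivity), Real.sqrt_sq (by positivity)]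
  rw [h1]
  calc Real.sqrt _ ≤ Real.sqrt (((2 : ℝ) ^ d) ^ 2) := Real.sqrt_le_sqrt hR
    _ = 2 ^ d := Real.sqrt_sq (by positivity)

/-- The Hamming weight of a vertex of the hypercube. -/
def wt {d : ℕ} (x : Fin d → Bool) : ℕ := (Finset.univ.filter fun i => x i = true).card

lemma wt_le_of_adj {d : ℕ} {x y : Fin d → Bool} (hxy : (hypercube d).Adj x y) :
    wt y ≤ wt x + 1 := by
  obtain ⟨i, -, hj⟩ := hxy
  have hsub : (Finset.univ.filter fun j => y j = true) ⊆
      insert i (Finset.univ.filter fun j => x j = true) := by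
    intro j hjm
    simp only [Finset.mem_filter, Finset.mem_univ, true_and] at hjm
    by_cases hji : j = i
    · subst hji; exact Finset.mem_insert_self j _
    · exact Finset.mem_insert_of_mem (by simp [hj j hji, hjm])
  calc wt y ≤ _ := Finset.card_le_card hsub
    _ ≤ wt x + 1 := Finset.card_insert_le _ _

lemma wt_le_dim {d : ℕ} (x : Fin d → Bool) : wt x ≤ d := by
  calc wt x ≤ Finset.univ.card := Finset.card_filter_le _ _
    _ = d := by simp

/-- Discrete intermediate value theorem along a walk in an induced subgraph. -/
lemma exists_wt_eq {d : ℕ} {S : Set (Fin d → Bool)} {t : ℕ} :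
    ∀ {x y : ↥S} (_ : ((hypercube d).induce S).Walk x y),
      wt x.1 < t → t < wt y.1 → ∃ z ∈ S, wt z = t := by
  intro x y p
  induction p with
  | nil => intro h1 h2; omega
  | @cons u v w huv p ih =>
    intro h1 h2
    have hadj : (hypercube d).Adj u.1 v.1 := huv
    have hv : wt v.1 ≤ t := by have := wt_le_of_adj hadj; omega
    rcases eq_or_lt_of_le hv with heq | hlt
    · exact ⟨v.1, v.2, heq⟩
    · exact ih hlt h2

/-- Branch sets entirely below level `s`. -/
def ASet {V : Type*} {d : ℕ} (μ : V → Set (Fin d → Bool)) (s : ℕ) : Set V :=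
  {a | ∀ x ∈ μ a, wt x < s}

/-- Branch sets entirely above level `s`. -/
def BSet {V : Type*} {d : ℕ} (μ : V → Set (Fin d → Bool)) (s : ℕ) : Set V :=
  {a | ∀ x ∈ μ a, s < wt x}

/-- Branch sets meeting level `s`. -/
def MSet {V : Type*} {d : ℕ} (μ : V → Set (Fin d → Bool)) (s : ℕ) : Set V :=
  {a | ∃ x ∈ μ a, wt x = s}

lemma mem_mid_of_wits {V : Type*} {d t : ℕ} {μ : V → Set (Fin d → Bool)}
    (hconn : ∀ a, ((hypercube d).induce (μ a)).Connected) {a : V}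
    {x y : Fin d → Bool} (hx : x ∈ μ a) (hy : y ∈ μ a)
    (hxt : t ≤ wt x) (hyt : wt y ≤ t) : a ∈ MSet μ t := by
  rcases eq_or_lt_of_le hxt with heq | hltx
  · exact ⟨x, hx, heq.symm⟩
  rcases eq_or_lt_of_le hyt with heq | hlty
  · exact ⟨y, hy, heq⟩
  obtain ⟨z, hz, hzt⟩ := ((hconn a).preconnected ⟨y, hy⟩ ⟨x, hx⟩).elim
    fun p => exists_wt_eq p hlty hltx
  exact ⟨z, hz, hzt⟩

lemma mem_mid {V : Type*} {d t : ℕ} {μ : V → Set (Fin d → Bool)}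
    (hconn : ∀ a, ((hypercube d).induce (μ a)).Connected) {a : V}
    (hA : a ∉ ASet μ t) (hB : a ∉ BSet μ t) : a ∈ MSet μ t := by
  simp only [ASet, BSet, Set.mem_setOf_eq, not_forall, not_lt] at hA hB
  obtain ⟨x, hx, hxt⟩ := hA
  obtain ⟨y, hy, hyt⟩ := hB
  exact mem_mid_of_wits hconn hx hy hxt hyt

lemma across_A_mem_mid {V : Type*} {d t : ℕ} {μ : V → Set (Fin d → Bool)}
    (hconn : ∀ a, ((hypercube d).induce (μ a)).Connected) {a b : V}
    (hedge : ∃ x ∈ μ a, ∃ y ∈ μ b, (hypercube d).Adj x y)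
    (ha : a ∈ ASet μ t) (hb : b ∉ ASet μ t) : b ∈ MSet μ t := by
  obtain ⟨x, hxa, y, hyb, hxy⟩ := hedge
  have hy : wt y ≤ t := by
    have h1 := wt_le_of_adj hxy
    have h2 := ha x hxa
    omega
  simp only [ASet, Set.mem_setOf_eq, not_forall, not_lt] at hb
  obtain ⟨x', hx'b, hx't⟩ := hb
  exact mem_mid_of_wits hconn hx'b hyb hx't hy

lemma across_B_mem_mid {V : Type*} {d t : ℕ} {μ : V → Set (Fin d → Bool)}
    (hconn : ∀ a, ((hypercube d).induce (μ a)).Connected) {a b : V}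
    (hedge : ∃ x ∈ μ a, ∃ y ∈ μ b, (hypercube d).Adj x y)
    (ha : a ∈ BSet μ t) (hb : b ∉ BSet μ t) : b ∈ MSet μ t := by
  obtain ⟨x, hxa, y, hyb, hxy⟩ := hedge
  have hy : t ≤ wt y := by
    have h1 := wt_le_of_adj hxy.symm
    have h2 := ha x hxa
    omega
  simp only [BSet, Set.mem_setOf_eq, not_forall, not_lt] at hb
  obtain ⟨x', hx'b, hx't⟩ := hb
  exact mem_mid_of_wits hconn hyb hx'b hy hx't

lemma mid_ncard_le {V : Type*} [Fintype V] {d t : ℕ} {μ : V → Set (Fin d → Bool)}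
    (hdisj : Pairwise fun a b => Disjoint (μ a) (μ b)) :
    (MSet μ t).ncard ≤ d.choose t := by
  classical
  have hch : ∀ a ∈ MSet μ t, ∃ x, x ∈ μ a ∧ wt x = t := by
    rintro a ⟨x, hx, hxt⟩
    exact ⟨x, hx, hxt⟩
  choose! f hf1 hf2 using hch
  have hmaps : ∀ a ∈ MSet μ t, (Finset.univ.filter fun i => f a i = true)
      ∈ (Finset.powersetCard t (Finset.univ : Finset (Fin d)) : Set (Finset (Fin d))) := by
    intro a ha
    simp only [Finset.coe_sort_coe, Finset.mem_coe, Finset.mem_powersetCard]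
    exact ⟨Finset.subset_univ _, hf2 a ha⟩
  have hinj : Set.InjOn (fun a => Finset.univ.filter fun i => f a i = true) (MSet μ t) := by
    intro a ha a' ha' hEq
    by_contra hne
    have hfx : f a = f a' := by
      funext i
      have hiff := Finset.ext_iff.mp hEq i
      simp only [Finset.mem_filter, Finset.mem_univ, true_and] at hiff
      cases hfa : f a i <;> cases hfa' : f a' i <;> simp_all
    have hd := hdisj hne
    exact Set.disjoint_left.mp hd (hf1 a ha) (hfx ▸ hf1 a' ha')
  calc (MSet μ t).ncard
      ≤ (↑(Finset.powersetCard t (Finset.univ : Finset (Fin d))) : Set (Finset (Fin d))).ncard :=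
        Set.ncard_le_ncard_of_injOn _ hmaps hinj (Set.toFinite _)
    _ = d.choose t := by
        rw [Set.ncard_coe_finset, Finset.card_powersetCard]
        simp


/-- An expander bound: a graph with max degree ≤ 3, Cheeger constant ≥ h, no isolated
vertices and n vertices that is a minor of Q_d satisfies
n ≤ (10 √2 e)/(√π h) · 2^d/√d. -/
theorem expander_minor_bound {V : Type*} [Fintype V] (G : SimpleGraph V) (n : ℕ)
    (hn : Fintype.card V = n)
    (hdeg : ∀ v, (G.neighborSet v).ncard ≤ 3)
    (hiso : ∀ v, ∃ u, G.Adj v u)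
    (h : ℝ) (hh : 0 < h)
    (hCheeger : ∀ U : Set V, U.Nonempty → 2 * U.ncard ≤ Fintype.card V →
      h * U.ncard ≤
        ({e : Sym2 V | e ∈ G.edgeSet ∧ ∃ a ∈ U, ∃ b ∈ Uᶜ, e = s(a, b)}.ncard : ℝ))
    (d : ℕ) (hminor : G.IsMinorOf (hypercube d)) :
    (n : ℝ) * h * Real.sqrt Real.pi * Real.sqrt d ≤
      10 * Real.sqrt 2 * Real.exp 1 * 2 ^ d := by
  classical
  obtain ⟨μ, hconn, hdisj, hadjm⟩ := hminor
  rcases Nat.eq_zero_or_pos n with hn0 | hnpos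
  · rw [hn0]
    simp only [Nat.cast_zero, zero_mul]
    positivity
  have hVne : Nonempty V := by
    rw [← Fintype.card_pos_iff, hn]; exact hnpos
  have hmu_ne : ∀ a : V, ∃ x, x ∈ μ a := by
    intro a
    obtain ⟨⟨x, hx⟩⟩ := (hconn a).nonempty
    exact ⟨x, hx⟩
  have hinc : ∀ v : V, (G.incidenceSet v).ncard ≤ 3 := by
    intro v
    have he : (G.incidenceSet v).ncard = (G.neighborSet v).ncard := by
      rw [← Nat.card_coe_set_eq, ← Nat.card_coe_set_eq]
      exact Nat.card_congr (G.incidenceSetEquivNeighborSet v)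
    rw [he]; exact hdeg v
  -- h ≤ 3
  have hh3 : h ≤ 3 := by
    obtain ⟨v⟩ := hVne
    obtain ⟨u, hvu⟩ := hiso v
    have hcard2 : 2 ≤ Fintype.card V :=
      Fintype.one_lt_card_iff_nontrivial.mpr ⟨v, u, G.ne_of_adj hvu⟩
    have h1 := hCheeger {v} ⟨v, rfl⟩ (by simpa using hcard2)
    have hsub : {e : Sym2 V | e ∈ G.edgeSet ∧ ∃ a ∈ ({v} : Set V),
        ∃ b ∈ ({v} : Set V)ᶜ, e = s(a, b)} ⊆ G.incidenceSet v := by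
      rintro e ⟨he, a, ha, b, hb, rfl⟩
      have hav : a = v := ha
      subst hav
      exact ⟨he, by simp⟩
    have h2 : ({e : Sym2 V | e ∈ G.edgeSet ∧ ∃ a ∈ ({v} : Set V),
        ∃ b ∈ ({v} : Set V)ᶜ, e = s(a, b)}.ncard : ℝ) ≤ 3 := by
      exact_mod_cast (Set.ncard_le_ncard hsub (Set.toFinite _)).trans (hinc v)
    rw [Set.ncard_singleton] at h1
    push_cast at h1
    linarith
  -- choose the cut level t
  set t : ℕ := Nat.findGreatest (fun s => 2 * (ASet μ s).ncard ≤ n) d with ht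
  have hg0 : 2 * (ASet μ 0).ncard ≤ n := by
    have hA0 : ASet μ 0 = ∅ := by
      ext a
      simp only [ASet, Set.mem_setOf_eq, Set.mem_empty_iff_false, iff_false, not_forall, not_lt]
      obtain ⟨x, hx⟩ := hmu_ne a
      exact ⟨x, hx, Nat.zero_le _⟩
    simp [hA0]
  have ht_le : t ≤ d := Nat.findGreatest_le d
  have ht1 : 2 * (ASet μ t).ncard ≤ n := by
    rw [ht]
    exact Nat.findGreatest_spec (P := fun s => 2 * (ASet μ s).ncard ≤ n) (Nat.zero_le d) hg0
  have hgd : (ASet μ (d + 1)).ncard = n := by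
    have hAd : ASet μ (d + 1) = Set.univ := by
      ext a
      simp only [ASet, Set.mem_setOf_eq, Set.mem_univ, iff_true]
      intro x _
      have := wt_le_dim x
      omega
    rw [hAd, Set.ncard_univ, Nat.card_eq_fintype_card, hn]
  have ht2 : n ≤ 2 * (ASet μ (t + 1)).ncard := by
    rcases eq_or_lt_of_le ht_le with heq | hlt
    · rw [heq, hgd]; omega
    · have hgr : ¬ (2 * (ASet μ (t + 1)).ncard ≤ n) :=
        Nat.findGreatest_is_greatest (P := fun s => 2 * (ASet μ s).ncard ≤ n) (n := d)
          (by rw [← ht]; exact Nat.lt_succ_self t) (by omega)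
      omega
  -- bound on the union of incidence sets over MSet
  have hUnion : (⋃ b ∈ MSet μ t, G.incidenceSet b).ncard ≤ 3 * (MSet μ t).ncard := by
    have hMeq : (⋃ b ∈ MSet μ t, G.incidenceSet b)
        = ↑((MSet μ t).toFinset.biUnion fun b => (G.incidenceSet b).toFinset) := by
      ext e
      simp [Set.mem_iUnion]
    rw [hMeq, Set.ncard_coe_finset]
    calc ((MSet μ t).toFinset.biUnion fun b => (G.incidenceSet b).toFinset).card
        ≤ (MSet μ t).toFinset.card * 3 :=
          Finset.card_biUnion_le_card_mul _ _ 3 (fun b _ => by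
            rw [← Set.ncard_eq_toFinset_card']; exact hinc b)
      _ = 3 * (MSet μ t).ncard := by rw [Set.ncard_eq_toFinset_card']; ring
  -- generic cut bound
  have cut_bound : ∀ U : Set V,
      {e : Sym2 V | e ∈ G.edgeSet ∧ ∃ a ∈ U, ∃ b ∈ Uᶜ, e = s(a, b)}
        ⊆ ⋃ b ∈ MSet μ t, G.incidenceSet b →
      2 * U.ncard ≤ Fintype.card V →
      h * U.ncard ≤ 3 * ((MSet μ t).ncard : ℝ) := by
    intro U hsub hU
    rcases U.eq_empty_or_nonempty with rfl | hne
    · simp only [Set.ncard_empty, Nat.cast_zero, mul_zero]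
      positivity
    have h1 := hCheeger U hne hU
    have h2 : ({e : Sym2 V | e ∈ G.edgeSet ∧ ∃ a ∈ U, ∃ b ∈ Uᶜ, e = s(a, b)}).ncard
        ≤ 3 * (MSet μ t).ncard :=
      (Set.ncard_le_ncard hsub (Set.toFinite _)).trans hUnion
    calc h * U.ncard ≤ _ := h1
      _ ≤ 3 * ((MSet μ t).ncard : ℝ) := by exact_mod_cast h2
  -- cut subset for ASet
  have hsubA : {e : Sym2 V | e ∈ G.edgeSet ∧ ∃ a ∈ ASet μ t, ∃ b ∈ (ASet μ t)ᶜ, e = s(a, b)}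
      ⊆ ⋃ b ∈ MSet μ t, G.incidenceSet b := by
    rintro e ⟨he, a, ha, b, hb, rfl⟩
    have hab : G.Adj a b := he
    have hbM : b ∈ MSet μ t := across_A_mem_mid hconn (hadjm hab) ha hb
    exact Set.mem_biUnion hbM ⟨he, by simp⟩
  have hsubB : {e : Sym2 V | e ∈ G.edgeSet ∧ ∃ a ∈ BSet μ t, ∃ b ∈ (BSet μ t)ᶜ, e = s(a, b)}
      ⊆ ⋃ b ∈ MSet μ t, G.incidenceSet b := by
    rintro e ⟨he, a, ha, b, hb, rfl⟩
    have hab : G.Adj a b := he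
    have hbM : b ∈ MSet μ t := across_B_mem_mid hconn (hadjm hab) ha hb
    exact Set.mem_biUnion hbM ⟨he, by simp⟩
  -- size of BSet
  have hABdisj : Disjoint (ASet μ (t + 1)) (BSet μ t) := by
    rw [Set.disjoint_left]
    intro a haA haB
    obtain ⟨x, hx⟩ := hmu_ne a
    have h1 := haA x hx
    have h2 := haB x hx
    omega
  have hBsize : (ASet μ (t + 1)).ncard + (BSet μ t).ncard ≤ n := by
    have h1 := Set.ncard_union_eq hABdisj (Set.toFinite _) (Set.toFinite _)
    have h2 : (ASet μ (t + 1) ∪ BSet μ t).ncard ≤ n := by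
      rw [← hn, ← Nat.card_eq_fintype_card, ← Set.ncard_univ]
      exact Set.ncard_le_ncard (Set.subset_univ _) (Set.toFinite _)
    omega
  have hB2 : 2 * (BSet μ t).ncard ≤ n := by omega
  -- covering
  have hcover : (Set.univ : Set V) ⊆ ASet μ t ∪ (BSet μ t ∪ MSet μ t) := by
    intro a _
    by_cases h1 : a ∈ ASet μ t
    · exact Or.inl h1
    by_cases h2 : a ∈ BSet μ t
    · exact Or.inr (Or.inl h2)
    · exact Or.inr (Or.inr (mem_mid hconn h1 h2))
  have hcount : n ≤ (ASet μ t).ncard + ((BSet μ t).ncard + (MSet μ t).ncard) := by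
    have h1 : (Set.univ : Set V).ncard ≤ (ASet μ t ∪ (BSet μ t ∪ MSet μ t)).ncard :=
      Set.ncard_le_ncard hcover (Set.toFinite _)
    rw [Set.ncard_univ, Nat.card_eq_fintype_card, hn] at h1
    calc n ≤ _ := h1
      _ ≤ (ASet μ t).ncard + (BSet μ t ∪ MSet μ t).ncard := Set.ncard_union_le _ _
      _ ≤ _ := Nat.add_le_add_left (Set.ncard_union_le _ _) _
  -- Cheeger applications
  have hAc : h * ((ASet μ t).ncard : ℝ) ≤ 3 * ((MSet μ t).ncard : ℝ) :=
    cut_bound _ hsubA (by rw [hn]; exact ht1)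
  have hBc : h * ((BSet μ t).ncard : ℝ) ≤ 3 * ((MSet μ t).ncard : ℝ) :=
    cut_bound _ hsubB (by rw [hn]; exact hB2)
  have hMc : h * ((MSet μ t).ncard : ℝ) ≤ 3 * ((MSet μ t).ncard : ℝ) :=
    mul_le_mul_of_nonneg_right hh3 (by positivity)
  -- combine
  have hM9 : h * (n : ℝ) ≤ 9 * ((MSet μ t).ncard : ℝ) := by
    have hcR : (n : ℝ) ≤ ((ASet μ t).ncard : ℝ) + (((BSet μ t).ncard : ℝ) + ((MSet μ t).ncard : ℝ)) := by
      exact_mod_cast hcount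
    have e1 : h * (n : ℝ) ≤ h * (((ASet μ t).ncard : ℝ) + (((BSet μ t).ncard : ℝ) + ((MSet μ t).ncard : ℝ))) :=
      mul_le_mul_of_nonneg_left hcR hh.le
    rw [mul_add, mul_add] at e1
    linarith
  have hMC : ((MSet μ t).ncard : ℝ) ≤ (d.choose (d / 2) : ℝ) := by
    exact_mod_cast (mid_ncard_le hdisj).trans (Nat.choose_le_middle t d)
  have hCd := choose_half_mul_sqrt_le d
  have hsqrtpi : Real.sqrt Real.pi ≤ 2 := by
    rw [show (2 : ℝ) = Real.sqrt 4 by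
      rw [show (4 : ℝ) = 2 ^ 2 by norm_num, Real.sqrt_sq (by norm_num)]]
    exact Real.sqrt_le_sqrt Real.pi_le_four
  have he2 : (2 : ℝ) ≤ Real.exp 1 := by
    have := Real.add_one_le_exp 1
    linarith
  have hs2 : (1 : ℝ) ≤ Real.sqrt 2 := by
    rw [show (1 : ℝ) = Real.sqrt 1 by simp]
    exact Real.sqrt_le_sqrt (by norm_num)
  have h2d : (0 : ℝ) < 2 ^ d := by positivity
  have hchain : (n : ℝ) * h * Real.sqrt Real.pi * Real.sqrt d ≤ 18 * 2 ^ d := by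
    calc (n : ℝ) * h * Real.sqrt Real.pi * Real.sqrt d
        = (h * n) * (Real.sqrt Real.pi * Real.sqrt d) := by ring
      _ ≤ (9 * ((MSet μ t).ncard : ℝ)) * (Real.sqrt Real.pi * Real.sqrt d) :=
          mul_le_mul_of_nonneg_right hM9 (by positivity)
      _ = (9 * Real.sqrt Real.pi) * (((MSet μ t).ncard : ℝ) * Real.sqrt d) := by ring
      _ ≤ (9 * 2) * ((d.choose (d / 2) : ℝ) * Real.sqrt d) := by
          apply mul_le_mul (by linarith) ?_ (by positivity) (by norm_num)
          exact mul_le_mul_of_nonneg_right hMC (Real.sqrt_nonneg _)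
      _ = 18 * ((d.choose (d / 2) : ℝ) * Real.sqrt d) := by norm_num
      _ ≤ 18 * 2 ^ d := by
          exact mul_le_mul_of_nonneg_left hCd (by norm_num)
  calc (n : ℝ) * h * Real.sqrt Real.pi * Real.sqrt d ≤ 18 * 2 ^ d := hchain
    _ ≤ 10 * Real.sqrt 2 * Real.exp 1 * 2 ^ d := by
        have h20 : (20 : ℝ) ≤ 10 * Real.sqrt 2 * Real.exp 1 := by nlinarith
        nlinarith
end

section
/- If H is a minor of G, then for any graph L, the Cartesian product H × L is a minor of G × L. -/
open SimpleGraph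

/-- Minors are preserved under box product with a fixed graph: if H ≤ G then
H □ L ≤ G □ L. -/
theorem minor_boxProd {V W U : Type*} (H : SimpleGraph V) (G : SimpleGraph W)
    (L : SimpleGraph U) (h : H.IsMinorOf G) : (H □ L).IsMinorOf (G □ L) := by
  obtain ⟨μ, hconn, hdisj, hadj⟩ := h
  refine ⟨fun p => μ p.1 ×ˢ {p.2}, ?_, ?_, ?_⟩
  · rintro ⟨a, u⟩
    have e : G.induce (μ a) ≃g (G □ L).induce ((μ a) ×ˢ ({u} : Set U)) :=
      { toFun := fun x => ⟨(x.1, u), x.2, rfl⟩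
        invFun := fun x => ⟨x.1.1, x.2.1⟩
        left_inv := fun x => rfl
        right_inv := by
          rintro ⟨⟨w, u'⟩, hw, hu⟩
          simp only [Set.mem_singleton_iff] at hu
          subst hu
          rfl
        map_rel_iff' := by
          rintro ⟨x, hx⟩ ⟨y, hy⟩
          simp [SimpleGraph.boxProd_adj, SimpleGraph.comap, Subtype.ext_iff] }
    exact (hconn a).map e.toHom e.toEquiv.surjective
  · rintro ⟨a, u⟩ ⟨b, v⟩ hne
    rw [Set.disjoint_left]
    rintro ⟨x, w⟩ ⟨hx, hw⟩ ⟨hx', hw'⟩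
    simp only [Set.mem_singleton_iff] at hw hw'
    rcases eq_or_ne a b with rfl | hab
    · exact hne (by rw [Prod.ext_iff]; exact ⟨rfl, hw.symm.trans hw'⟩)
    · exact (hdisj hab).le_bot ⟨hx, hx'⟩
  · rintro ⟨a, u⟩ ⟨b, v⟩ hab
    rcases hab with ⟨hab, heq⟩ | ⟨huv2, heq2⟩
    · simp only at hab heq
      subst heq
      obtain ⟨x, hx, y, hy, hxy⟩ := hadj hab
      exact ⟨(x, u), ⟨hx, rfl⟩, (y, u), ⟨hy, rfl⟩, Or.inl ⟨hxy, rfl⟩⟩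
    · simp only at huv2 heq2
      subst heq2
      obtain ⟨x, hx⟩ := (hconn a).nonempty
      exact ⟨(x, u), ⟨hx, rfl⟩, (x, v), ⟨hx, rfl⟩, by simp [SimpleGraph.boxProd_adj, huv2]⟩
end
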